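/- arXiv:2208.07557 — 2 statements merged into one kernel-verified Lean document; each statement's English description precedes it below -/
import Mathlib

section
/- Let A be a finite nonempty set and let w be an n-ary weak near-unanimity operation on A with n ≥ 3. Then there exists a finite set B ⊇ A with exactly three additional elements (so |B| = |A| + 3) and an n-ary weak near-unanimity operation v on B such that v restricted to A^n equals w (in particular A is closed under v), and the algebra (B; v) is simple: the only equivalence relations on B compatible with v are the equality relation and the full relation B×B. -/
universe u

/-- A `k`-ary operation `w` on `A` is a weak near-unanimity operation:
it is idempotent and `w(y,x,…,x) = w(x,y,x,…,x) = … = w(x,…,x,y)`. -/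
def IsWNU {A : Type*} {k : ℕ} (w : (Fin k → A) → A) : Prop :=
  (∀ x : A, w (fun _ => x) = x) ∧
  ∀ (x y : A) (i j : Fin k),
    w (Function.update (fun _ => x) i y) = w (Function.update (fun _ => x) j y)

namespace WNUSimple

variable {A : Type u} {n : ℕ}

def fz (hn : 3 ≤ n) : Fin n := ⟨0, by omega⟩
def fo (hn : 3 ≤ n) : Fin n := ⟨1, by omega⟩
def ft (hn : 3 ≤ n) : Fin n := ⟨2, by omega⟩

lemma exists_ne_idx (hn : 3 ≤ n) (i : Fin n) : ∃ m : Fin n, m ≠ i := by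
  by_cases h0 : i = fz hn
  · refine ⟨fo hn, ?_⟩
    rw [h0]
    intro hh
    have := congrArg Fin.val hh
    simp [fz, fo] at this
  · exact ⟨fz hn, fun hh => h0 hh.symm⟩

lemma inr_ne_inl {k : Fin 3} {a : A} : (Sum.inr k : A ⊕ Fin 3) ≠ Sum.inl a :=
  fun hh => nomatch hh

lemma inl_ne_inr {k : Fin 3} {a : A} : (Sum.inl a : A ⊕ Fin 3) ≠ Sum.inr k :=
  fun hh => nomatch hh

lemma inr_ne_inr {k l : Fin 3} (h : k ≠ l) : (Sum.inr k : A ⊕ Fin 3) ≠ Sum.inr l :=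
  fun hh => h (Sum.inr.inj hh)

open Classical in
/-- The extension of `w` to `A ⊕ Fin 3`. -/
noncomputable def ext (hn : 3 ≤ n) (w : (Fin n → A) → A)
    (t : Fin n → A ⊕ Fin 3) : A ⊕ Fin 3 :=
  if ∀ i, t i = t (fz hn) then t (fz hn)
  else if hA : ∀ i, ∃ a, t i = Sum.inl a then Sum.inl (w fun i => (hA i).choose)
  else if hex : ∃ i, ∃ a : A, t i = Sum.inl a then
    if ∃ a b : A, a ≠ b ∧ (∃ i, t i = Sum.inl a) ∧ (∃ i, t i = Sum.inl b) then
      Sum.inr 1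
    else
      if ∃ i, t i = Sum.inr 1 then
        if ∃ i, t i = Sum.inr 2 then Sum.inl hex.choose_spec.choose
        else Sum.inr 2
      else if ∃ i, t i = Sum.inr 2 then Sum.inr 1
      else Sum.inl hex.choose_spec.choose
  else Sum.inr 0

variable {w : (Fin n → A) → A}

lemma ext_const (hn : 3 ≤ n) (c : A ⊕ Fin 3) :
    ext hn w (fun _ => c) = c := by
  simp [ext]

lemma ext_inl (hn : 3 ≤ n) (hw : IsWNU w) (x : Fin n → A) :
    ext hn w (fun i => Sum.inl (x i)) = Sum.inl (w x) := by
  by_cases hc : ∀ i, (Sum.inl (x i) : A ⊕ Fin 3) = Sum.inl (x (fz hn))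
  · rw [ext, if_pos hc]
    have hx : x = fun _ => x (fz hn) := funext fun i => Sum.inl.inj (hc i)
    rw [show w x = x (fz hn) by rw [hx, hw.1]]
  · have hA : ∀ i, ∃ a : A, (Sum.inl (x i) : A ⊕ Fin 3) = Sum.inl a :=
      fun i => ⟨x i, rfl⟩
    rw [ext, if_neg hc, dif_pos hA]
    congr 1
    congr 1
    funext i
    exact (Sum.inl.inj (hA i).choose_spec).symm

lemma ext_noA (hn : 3 ≤ n) {t : Fin n → A ⊕ Fin 3}
    (hne : ∃ i j, t i ≠ t j) (h : ∀ i a, t i ≠ Sum.inl a) :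
    ext hn w t = Sum.inr 0 := by
  have hc : ¬ ∀ i, t i = t (fz hn) := by
    intro hall; obtain ⟨i, j, hij⟩ := hne
    exact hij ((hall i).trans (hall j).symm)
  have hA : ¬ ∀ i, ∃ a, t i = Sum.inl a := by
    intro hA; obtain ⟨a, ha⟩ := hA (fz hn); exact h _ _ ha
  have hex : ¬ ∃ i, ∃ a : A, t i = Sum.inl a := by
    rintro ⟨i, a, ha⟩; exact h i a ha
  rw [ext, if_neg hc, dif_neg hA, dif_neg hex]

lemma ext_twoA (hn : 3 ≤ n) {t : Fin n → A ⊕ Fin 3} {a b : A}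
    (ha : ∃ i, t i = Sum.inl a) (hb : ∃ i, t i = Sum.inl b) (hab : a ≠ b)
    (hk : ∃ i k, t i = Sum.inr k) :
    ext hn w t = Sum.inr 1 := by
  obtain ⟨i0, hi0⟩ := ha
  obtain ⟨j0, k0, hj0⟩ := hk
  have hc : ¬ ∀ i, t i = t (fz hn) := by
    intro hall
    have e1 : t (fz hn) = Sum.inl a := by rw [← hall i0]; exact hi0
    have e2 : t (fz hn) = Sum.inr k0 := by rw [← hall j0]; exact hj0
    rw [e1] at e2; exact nomatch e2
  have hA : ¬ ∀ i, ∃ a, t i = Sum.inl a := by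
    intro hA; obtain ⟨a', ha'⟩ := hA j0; rw [hj0] at ha'; exact nomatch ha'
  have hex : ∃ i, ∃ a : A, t i = Sum.inl a := ⟨i0, a, hi0⟩
  rw [ext, if_neg hc, dif_neg hA, dif_pos hex,
    if_pos ⟨a, b, hab, ⟨i0, hi0⟩, hb⟩]

open Classical in
lemma ext_oneA (hn : 3 ≤ n) {t : Fin n → A ⊕ Fin 3} {a : A}
    (ha : ∃ i, t i = Sum.inl a) (hu : ∀ i b, t i = Sum.inl b → b = a)
    (hk : ∃ i k, t i = Sum.inr k) :
    ext hn w t =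
      if ∃ i, t i = Sum.inr 1 then
        (if ∃ i, t i = Sum.inr 2 then Sum.inl a else Sum.inr 2)
      else if ∃ i, t i = Sum.inr 2 then Sum.inr 1
      else Sum.inl a := by
  obtain ⟨i0, hi0⟩ := ha
  obtain ⟨j0, k0, hj0⟩ := hk
  have hc : ¬ ∀ i, t i = t (fz hn) := by
    intro hall
    have e1 : t (fz hn) = Sum.inl a := by rw [← hall i0]; exact hi0
    have e2 : t (fz hn) = Sum.inr k0 := by rw [← hall j0]; exact hj0
    rw [e1] at e2; exact nomatch e2
  have hA : ¬ ∀ i, ∃ a, t i = Sum.inl a := by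
    intro hA; obtain ⟨a', ha'⟩ := hA j0; rw [hj0] at ha'; exact nomatch ha'
  have hex : ∃ i, ∃ a : A, t i = Sum.inl a := ⟨i0, a, hi0⟩
  have htwo : ¬ ∃ a b : A, a ≠ b ∧ (∃ i, t i = Sum.inl a) ∧ (∃ i, t i = Sum.inl b) := by
    rintro ⟨a', b', hab, ⟨i1, hi1⟩, ⟨i2, hi2⟩⟩
    exact hab ((hu _ _ hi1).trans (hu _ _ hi2).symm)
  have hch : hex.choose_spec.choose = a := hu _ _ hex.choose_spec.choose_spec
  rw [ext, if_neg hc, dif_neg hA, dif_pos hex, if_neg htwo, hch]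

/-- tuple `(y, x, x, …, x)`. -/
def U (x y : A ⊕ Fin 3) : Fin n → A ⊕ Fin 3 := fun i => if i.val = 0 then y else x

/-- tuple `(y, z, x, x, …, x)`. -/
def T (x y z : A ⊕ Fin 3) : Fin n → A ⊕ Fin 3 :=
  fun i => if i.val = 0 then y else if i.val = 1 then z else x

lemma U_mem (hn : 3 ≤ n) (x y z : A ⊕ Fin 3) :
    (∃ i : Fin n, U x y i = z) ↔ z = y ∨ z = x := by
  constructor
  · rintro ⟨i, hi⟩
    unfold U at hi
    split at hi
    · exact Or.inl hi.symm
    · exact Or.inr hi.symm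
  · rintro (rfl | rfl)
    · exact ⟨fz hn, by simp [U, fz]⟩
    · exact ⟨fo hn, by simp [U, fo]⟩

lemma T_mem (hn : 3 ≤ n) (x y z u : A ⊕ Fin 3) :
    (∃ i : Fin n, T x y z i = u) ↔ u = y ∨ u = z ∨ u = x := by
  constructor
  · rintro ⟨i, hi⟩
    unfold T at hi
    split at hi
    · exact Or.inl hi.symm
    · split at hi
      · exact Or.inr (Or.inl hi.symm)
      · exact Or.inr (Or.inr hi.symm)
  · rintro (rfl | rfl | rfl)
    · exact ⟨fz hn, by simp [T, fz]⟩
    · exact ⟨fo hn, by simp [T, fo]⟩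
    · exact ⟨ft hn, by simp [T, ft]⟩

section Values

variable (hn : 3 ≤ n) (a b : A)

lemma ext_U_oneA (k : Fin 3) (h1 : k = 1 → False) (h2 : k = 2 → False) :
    ext hn w (U (Sum.inr k) (Sum.inl a)) = Sum.inl a := by
  rw [ext_oneA hn (a := a) ((U_mem hn _ _ _).mpr (Or.inl rfl))
      (fun i c h => by
        rcases (U_mem hn _ _ _).mp ⟨i, h⟩ with h' | h'
        · exact Sum.inl.inj h'
        · exact absurd h' inl_ne_inr)
      ⟨fo hn, k, by simp [U, fo]⟩,
    if_neg (fun hcon => by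
      rcases (U_mem hn _ _ _).mp hcon with h' | h'
      · exact inr_ne_inl h'
      · exact h1 (Sum.inr.inj h').symm),
    if_neg (fun hcon => by
      rcases (U_mem hn _ _ _).mp hcon with h' | h'
      · exact inr_ne_inl h'
      · exact h2 (Sum.inr.inj h').symm)]

lemma ext_U_oneA' (k : Fin 3) (h1 : k = 1 → False) (h2 : k = 2 → False) :
    ext hn w (U (Sum.inl a) (Sum.inr k)) = Sum.inl a := by
  rw [ext_oneA hn (a := a) ((U_mem hn _ _ _).mpr (Or.inr rfl))
      (fun i c h => by
        rcases (U_mem hn _ _ _).mp ⟨i, h⟩ with h' | h'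
        · exact absurd h' inl_ne_inr
        · exact Sum.inl.inj h')
      ⟨fz hn, k, by simp [U, fz]⟩,
    if_neg (fun hcon => by
      rcases (U_mem hn _ _ _).mp hcon with h' | h'
      · exact h1 (Sum.inr.inj h').symm
      · exact inr_ne_inl h'),
    if_neg (fun hcon => by
      rcases (U_mem hn _ _ _).mp hcon with h' | h'
      · exact h2 (Sum.inr.inj h').symm
      · exact inr_ne_inl h')]

lemma ext_U_n1A : ext hn w (U (Sum.inr 1) (Sum.inl a)) = Sum.inr 2 := by
  rw [ext_oneA hn (a := a) ((U_mem hn _ _ _).mpr (Or.inl rfl))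
      (fun i c h => by
        rcases (U_mem hn _ _ _).mp ⟨i, h⟩ with h' | h'
        · exact Sum.inl.inj h'
        · exact absurd h' inl_ne_inr)
      ⟨fo hn, 1, by simp [U, fo]⟩,
    if_pos ((U_mem hn _ _ _).mpr (Or.inr rfl)),
    if_neg (fun hcon => by
      rcases (U_mem hn _ _ _).mp hcon with h' | h'
      · exact inr_ne_inl h'
      · exact inr_ne_inr (by decide) h')]

lemma ext_U_An1 : ext hn w (U (Sum.inl a) (Sum.inr 1)) = Sum.inr 2 := by
  rw [ext_oneA hn (a := a) ((U_mem hn _ _ _).mpr (Or.inr rfl))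
      (fun i c h => by
        rcases (U_mem hn _ _ _).mp ⟨i, h⟩ with h' | h'
        · exact absurd h' inl_ne_inr
        · exact Sum.inl.inj h')
      ⟨fz hn, 1, by simp [U, fz]⟩,
    if_pos ((U_mem hn _ _ _).mpr (Or.inl rfl)),
    if_neg (fun hcon => by
      rcases (U_mem hn _ _ _).mp hcon with h' | h'
      · exact inr_ne_inr (by decide) h'
      · exact inr_ne_inl h')]

lemma ext_U_n2A : ext hn w (U (Sum.inr 2) (Sum.inl a)) = Sum.inr 1 := by
  rw [ext_oneA hn (a := a) ((U_mem hn _ _ _).mpr (Or.inl rfl))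
      (fun i c h => by
        rcases (U_mem hn _ _ _).mp ⟨i, h⟩ with h' | h'
        · exact Sum.inl.inj h'
        · exact absurd h' inl_ne_inr)
      ⟨fo hn, 2, by simp [U, fo]⟩,
    if_neg (fun hcon => by
      rcases (U_mem hn _ _ _).mp hcon with h' | h'
      · exact inr_ne_inl h'
      · exact inr_ne_inr (by decide) h'),
    if_pos ((U_mem hn _ _ _).mpr (Or.inr rfl))]

lemma ext_U_An2 : ext hn w (U (Sum.inl a) (Sum.inr 2)) = Sum.inr 1 := by
  rw [ext_oneA hn (a := a) ((U_mem hn _ _ _).mpr (Or.inr rfl))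
      (fun i c h => by
        rcases (U_mem hn _ _ _).mp ⟨i, h⟩ with h' | h'
        · exact absurd h' inl_ne_inr
        · exact Sum.inl.inj h')
      ⟨fz hn, 2, by simp [U, fz]⟩,
    if_neg (fun hcon => by
      rcases (U_mem hn _ _ _).mp hcon with h' | h'
      · exact inr_ne_inr (by decide) h'
      · exact inr_ne_inl h'),
    if_pos ((U_mem hn _ _ _).mpr (Or.inl rfl))]

lemma ext_U_newnew (k l : Fin 3) (hkl : k ≠ l) :
    ext hn w (U (Sum.inr k) (Sum.inr l)) = Sum.inr 0 := by
  apply ext_noA hn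
  · have e1 : U (Sum.inr k) (Sum.inr l) (fz hn) = (Sum.inr l : A ⊕ Fin 3) := by
      simp [U, fz]
    have e2 : U (Sum.inr k) (Sum.inr l) (fo hn) = (Sum.inr k : A ⊕ Fin 3) := by
      simp [U, fo]
    refine ⟨fz hn, fo hn, ?_⟩
    rw [e1, e2]
    exact inr_ne_inr (fun h => hkl h.symm)
  · intro i a h
    rcases (U_mem hn _ _ _).mp ⟨i, h⟩ with h' | h' <;> exact absurd h'.symm inr_ne_inl

lemma ext_T1 (hab : a ≠ b) :
    ext hn w (T (Sum.inl b) (Sum.inr 0) (Sum.inl a)) = Sum.inr 1 := by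
  apply ext_twoA hn (a := a) (b := b) _ _ hab
  · exact ⟨fz hn, 0, by simp [T, fz]⟩
  · exact (T_mem hn _ _ _ _).mpr (Or.inr (Or.inl rfl))
  · exact (T_mem hn _ _ _ _).mpr (Or.inr (Or.inr rfl))

lemma ext_T2 :
    ext hn w (T (Sum.inr 2) (Sum.inl a) (Sum.inr 1)) = Sum.inl a := by
  rw [ext_oneA hn (a := a) ((T_mem hn _ _ _ _).mpr (Or.inl rfl))
      (fun i c h => by
        rcases (T_mem hn _ _ _ _).mp ⟨i, h⟩ with h' | h' | h'
        · exact Sum.inl.inj h'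
        · exact absurd h' inl_ne_inr
        · exact absurd h' inl_ne_inr)
      ⟨fo hn, 1, by simp [T, fo]⟩,
    if_pos ((T_mem hn _ _ _ _).mpr (Or.inr (Or.inl rfl))),
    if_pos ((T_mem hn _ _ _ _).mpr (Or.inr (Or.inr rfl)))]

end Values

/-- `ext` only depends on the range of the tuple, for mixed non-constant tuples. -/
lemma ext_congr (hn : 3 ≤ n) {t s : Fin n → A ⊕ Fin 3}
    (h : ∀ z, (∃ i, t i = z) ↔ (∃ i, s i = z))
    (hk : ∃ i k, t i = Sum.inr k) (hne : ∃ i j, t i ≠ t j) :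
    ext hn w t = ext hn w s := by
  obtain ⟨j0, k0, hj0⟩ := hk
  obtain ⟨j1, hj1⟩ := (h (Sum.inr k0)).mp ⟨j0, hj0⟩
  have hne_s : ∃ i j, s i ≠ s j := by
    obtain ⟨i, j, hij⟩ := hne
    obtain ⟨i', hi'⟩ := (h (t i)).mp ⟨i, rfl⟩
    obtain ⟨j', hj'⟩ := (h (t j)).mp ⟨j, rfl⟩
    exact ⟨i', j', by rw [hi', hj']; exact hij⟩
  have hc_t : ¬ ∀ i, t i = t (fz hn) := by
    intro hall; obtain ⟨i, j, hij⟩ := hne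
    exact hij ((hall i).trans (hall j).symm)
  have hc_s : ¬ ∀ i, s i = s (fz hn) := by
    intro hall; obtain ⟨i, j, hij⟩ := hne_s
    exact hij ((hall i).trans (hall j).symm)
  have hA_t : ¬ ∀ i, ∃ a, t i = Sum.inl a := by
    intro hA; obtain ⟨a, ha⟩ := hA j0; rw [hj0] at ha; exact nomatch ha
  have hA_s : ¬ ∀ i, ∃ a, s i = Sum.inl a := by
    intro hA; obtain ⟨a, ha⟩ := hA j1; rw [hj1] at ha; exact nomatch ha
  rw [ext, ext, if_neg hc_t, if_neg hc_s, dif_neg hA_t, dif_neg hA_s]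
  by_cases hex : ∃ i, ∃ a : A, t i = Sum.inl a
  · have hex_s : ∃ i, ∃ a : A, s i = Sum.inl a := by
      obtain ⟨i, a, ha⟩ := hex
      obtain ⟨i', hi'⟩ := (h (Sum.inl a)).mp ⟨i, ha⟩
      exact ⟨i', a, hi'⟩
    rw [dif_pos hex, dif_pos hex_s]
    have htwo : (∃ a b : A, a ≠ b ∧ (∃ i, t i = Sum.inl a) ∧ (∃ i, t i = Sum.inl b)) ↔
        (∃ a b : A, a ≠ b ∧ (∃ i, s i = Sum.inl a) ∧ (∃ i, s i = Sum.inl b)) := by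
      constructor <;> rintro ⟨a, b, hab, ha, hb⟩
      · exact ⟨a, b, hab, (h _).mp ha, (h _).mp hb⟩
      · exact ⟨a, b, hab, (h _).mpr ha, (h _).mpr hb⟩
    by_cases h2 : ∃ a b : A, a ≠ b ∧ (∃ i, t i = Sum.inl a) ∧ (∃ i, t i = Sum.inl b)
    · rw [if_pos h2, if_pos (htwo.mp h2)]
    · have h2s : ¬ ∃ a b : A, a ≠ b ∧ (∃ i, s i = Sum.inl a) ∧ (∃ i, s i = Sum.inl b) :=
        fun hs => h2 (htwo.mpr hs)
      have hch : hex_s.choose_spec.choose = hex.choose_spec.choose := by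
        by_contra hne'
        exact h2 ⟨_, _, fun hh => hne' hh.symm,
          ⟨_, hex.choose_spec.choose_spec⟩,
          (h _).mpr ⟨_, hex_s.choose_spec.choose_spec⟩⟩
      rw [if_neg h2, if_neg h2s, hch]
      by_cases hc1 : ∃ i, t i = Sum.inr 1
      · rw [if_pos hc1, if_pos ((h (Sum.inr 1)).mp hc1)]
        by_cases hc2 : ∃ i, t i = Sum.inr 2
        · rw [if_pos hc2, if_pos ((h (Sum.inr 2)).mp hc2)]
        · rw [if_neg hc2, if_neg (fun hs => hc2 ((h (Sum.inr 2)).mpr hs))]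
      · rw [if_neg hc1, if_neg (fun hs => hc1 ((h (Sum.inr 1)).mpr hs))]
        by_cases hc2 : ∃ i, t i = Sum.inr 2
        · rw [if_pos hc2, if_pos ((h (Sum.inr 2)).mp hc2)]
        · rw [if_neg hc2, if_neg (fun hs => hc2 ((h (Sum.inr 2)).mpr hs))]
  · have hex_s : ¬ ∃ i, ∃ a : A, s i = Sum.inl a := by
      rintro ⟨i, a, ha⟩
      obtain ⟨i', hi'⟩ := (h (Sum.inl a)).mpr ⟨i, ha⟩
      exact hex ⟨i', a, hi'⟩
    rw [dif_neg hex, dif_neg hex_s]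

lemma update_mem (hn : 3 ≤ n) (x y z : A ⊕ Fin 3) (i : Fin n) :
    (∃ l, Function.update (fun _ => x) i y l = z) ↔ z = y ∨ z = x := by
  constructor
  · rintro ⟨l, hl⟩
    by_cases hli : l = i
    · subst hli; rw [Function.update_self] at hl; exact Or.inl hl.symm
    · rw [Function.update_of_ne hli] at hl; exact Or.inr hl.symm
  · rintro (rfl | rfl)
    · exact ⟨i, Function.update_self _ _ _⟩
    · obtain ⟨l, hl⟩ := exists_ne_idx hn i
      exact ⟨l, Function.update_of_ne hl _ _⟩

lemma ext_update_congr (hn : 3 ≤ n) {x y : A ⊕ Fin 3} (hxy : y ≠ x)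
    (hk : (∃ k, x = Sum.inr k) ∨ (∃ k, y = Sum.inr k)) (i j : Fin n) :
    ext hn w (Function.update (fun _ => x) i y) =
      ext hn w (Function.update (fun _ => x) j y) := by
  apply ext_congr hn
  · intro z
    rw [update_mem hn _ _ _ i, update_mem hn _ _ _ j]
  · obtain ⟨m, hm⟩ := exists_ne_idx hn i
    rcases hk with ⟨k, rfl⟩ | ⟨k, rfl⟩
    · exact ⟨m, k, Function.update_of_ne hm _ _⟩
    · exact ⟨i, k, Function.update_self _ _ _⟩
  · obtain ⟨m, hm⟩ := exists_ne_idx hn i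
    refine ⟨i, m, ?_⟩
    rw [Function.update_self, Function.update_of_ne hm]
    exact hxy

end WNUSimple

open WNUSimple in
/-- Every finite algebra with an `n`-ary weak near-unanimity operation
(`n ≥ 3`) embeds into a finite simple algebra with an `n`-ary weak
near-unanimity operation, obtained by adding exactly three new elements. -/
theorem wnu_embeds_in_simple {A : Type u} [Fintype A] [Nonempty A] {n : ℕ}
    (hn : 3 ≤ n) (w : (Fin n → A) → A) (hw : IsWNU w) :
    ∃ (B : Type u) (_ : Fintype B) (ι : A ↪ B) (v : (Fin n → B) → B),
      Fintype.card B = Fintype.card A + 3 ∧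
      IsWNU v ∧
      (∀ x : Fin n → A, v (fun i => ι (x i)) = ι (w x)) ∧
      (∀ θ : B → B → Prop, Equivalence θ →
        (∀ xs ys : Fin n → B, (∀ i, θ (xs i) (ys i)) → θ (v xs) (v ys)) →
        (θ = fun x y => x = y) ∨ (θ = fun _ _ => True)) := by
  classical
  refine ⟨A ⊕ Fin 3, inferInstance, ⟨Sum.inl, Sum.inl_injective⟩, ext hn w, ?_, ?_, ?_, ?_⟩
  · simp
  · -- IsWNU
    constructor
    · exact fun c => ext_const hn c
    · intro x y i j
      by_cases hxy : y = x
      · rw [hxy]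
        have hu' : ∀ l : Fin n, Function.update (fun _ => x) l x = fun _ => x := by
          intro l; funext m
          rcases eq_or_ne m l with rfl | hm
          · rw [Function.update_self]
          · rw [Function.update_of_ne hm]
        rw [hu' i, hu' j]
      · rcases x with a | k
        · rcases y with b | l
          · -- both in A
            have hup : ∀ l : Fin n,
                Function.update (fun _ => (Sum.inl a : A ⊕ Fin 3)) l (Sum.inl b) =
                  fun m => (Sum.inl (Function.update (fun _ => a) l b m) : A ⊕ Fin 3) := by
              intro l; funext m
              rcases eq_or_ne m l with rfl | hm
              · rw [Function.update_self, Function.update_self]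
              · rw [Function.update_of_ne hm, Function.update_of_ne hm]
            rw [hup i, hup j, ext_inl hn hw, ext_inl hn hw, hw.2 a b i j]
          · exact ext_update_congr hn hxy (Or.inr ⟨l, rfl⟩) i j
        · exact ext_update_congr hn hxy (Or.inl ⟨k, rfl⟩) i j
  · -- extends w
    intro x
    exact ext_inl hn hw x
  · -- simplicity
    intro θ hθe hθc
    by_cases htriv : ∀ x y, θ x y → x = y
    · left
      funext x y
      exact propext ⟨htriv x y, fun h => h ▸ hθe.refl x⟩
    · right
      push_neg at htriv
      obtain ⟨x, y, hxy, hne⟩ := htriv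
      -- congruence steps
      have step_odd : ∀ {x x' : A ⊕ Fin 3}, θ x x' →
          ∀ c, θ (ext hn w (U c x)) (ext hn w (U c x')) := by
        intro x x' hx c
        apply hθc
        intro i
        simp only [U]
        split_ifs
        · exact hx
        · exact hθe.refl c
      have step_rep : ∀ {c c' : A ⊕ Fin 3}, θ c c' →
          ∀ x, θ (ext hn w (U c x)) (ext hn w (U c' x)) := by
        intro c c' hc x
        apply hθc
        intro i
        simp only [U]
        split_ifs
        · exact hθe.refl x
        · exact hc
      have stepT : ∀ {x z : A ⊕ Fin 3}, θ x z →
          ∀ y, θ (ext hn w (T x y z)) (ext hn w (U z y)) := by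
        intro x z hx y
        apply hθc
        intro i
        simp only [U, T]
        split_ifs
        · exact hθe.refl y
        · exact hθe.refl z
        · exact hx
      -- key collapsing lemmas
      have key : ∀ a : A, θ (Sum.inl a) (Sum.inr 1) → ∀ u, θ u (Sum.inl a) := by
        intro a h1
        have h2 : θ (Sum.inl a) (Sum.inr 0) := by
          have := step_odd h1 (Sum.inr 0)
          rwa [ext_U_oneA hn a 0 (by decide) (by decide),
            ext_U_newnew hn 0 1 (by decide)] at this
        have h3 : θ (Sum.inr 2) (Sum.inr 0) := by
          have := step_odd h2 (Sum.inr 1)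
          rwa [ext_U_n1A hn a, ext_U_newnew hn 1 0 (by decide)] at this
        have h01 : θ (Sum.inr 0) (Sum.inr 1) := hθe.trans (hθe.symm h2) h1
        have hbn2 : ∀ b : A, θ (Sum.inl b) (Sum.inr 2) := by
          intro b
          have := step_rep h01 (Sum.inl b)
          rwa [ext_U_oneA hn b 0 (by decide) (by decide), ext_U_n1A hn b] at this
        intro u
        rcases u with b | m
        · exact hθe.trans (hbn2 b) (hθe.symm (hbn2 a))
        · rcases (by decide : ∀ m : Fin 3, m = 0 ∨ m = 1 ∨ m = 2) m with rfl | rfl | rfl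
          · exact hθe.symm h2
          · exact hθe.symm h1
          · exact hθe.symm (hbn2 a)
      have keyA0 : ∀ a : A, θ (Sum.inl a) (Sum.inr 0) → ∀ u, θ u (Sum.inl a) := by
        intro a h2
        have h3 : θ (Sum.inr 2) (Sum.inr 0) := by
          have := step_odd h2 (Sum.inr 1)
          rwa [ext_U_n1A hn a, ext_U_newnew hn 1 0 (by decide)] at this
        have h4 : θ (Sum.inr 1) (Sum.inl a) := by
          have := step_odd h3 (Sum.inl a)
          rwa [ext_U_An2 hn a, ext_U_oneA' hn a 0 (by decide) (by decide)] at this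
        exact key a (hθe.symm h4)
      have case2 : ∀ (a : A) (l : Fin 3), θ (Sum.inl a) (Sum.inr l) →
          ∀ u, θ u (Sum.inl a) := by
        intro a l h
        rcases (by decide : ∀ m : Fin 3, m = 0 ∨ m = 1 ∨ m = 2) l with rfl | rfl | rfl
        · exact keyA0 a h
        · exact key a h
        · -- l = 2
          have h2 : θ (Sum.inl a) (Sum.inr 0) := by
            have := step_odd h (Sum.inr 0)
            rwa [ext_U_oneA hn a 0 (by decide) (by decide),
              ext_U_newnew hn 0 2 (by decide)] at this
          exact keyA0 a h2
      have final : ∀ a : A, (∀ u, θ u (Sum.inl a)) → θ = fun _ _ => True := by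
        intro a hall
        funext u u'
        exact eq_true (hθe.trans (hall u) (hθe.symm (hall u')))
      -- case analysis on the nontrivial pair
      rcases x with a | k
      · rcases y with b | l
        · -- two elements of A
          have hab : a ≠ b := fun h => hne (by rw [h])
          have h := stepT (hθe.symm hxy) (Sum.inr 0)
          rw [ext_T1 hn a b hab, ext_U_oneA' hn a 0 (by decide) (by decide)] at h
          exact final a (key a (hθe.symm h))
        · exact final a (case2 a l hxy)
      · rcases y with b | l
        · exact final b (case2 b k (hθe.symm hxy))
        · -- two new elements
          obtain ⟨a⟩ := ‹Nonempty A›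
          have hkl : k ≠ l := fun h => hne (by rw [h])
          have main01 : θ (Sum.inr 0) (Sum.inr 1) → θ = fun _ _ => True := by
            intro h01
            have hb2 : θ (Sum.inl a) (Sum.inr 2) := by
              have := step_rep h01 (Sum.inl a)
              rwa [ext_U_oneA hn a 0 (by decide) (by decide), ext_U_n1A hn a] at this
            exact final a (case2 a 2 hb2)
          have main02 : θ (Sum.inr 0) (Sum.inr 2) → θ = fun _ _ => True := by
            intro h02
            have hb1 : θ (Sum.inl a) (Sum.inr 1) := by
              have := step_rep h02 (Sum.inl a)
              rwa [ext_U_oneA hn a 0 (by decide) (by decide), ext_U_n2A hn a] at this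
            exact final a (key a hb1)
          have main21 : θ (Sum.inr 2) (Sum.inr 1) → θ = fun _ _ => True := by
            intro h21
            have hb2 : θ (Sum.inl a) (Sum.inr 2) := by
              have := stepT h21 (Sum.inl a)
              rwa [ext_T2 hn a, ext_U_n1A hn a] at this
            exact final a (case2 a 2 (hθe.symm (hθe.trans (hθe.symm hb2) (hθe.refl _))))
          rcases (by decide : ∀ m : Fin 3, m = 0 ∨ m = 1 ∨ m = 2) k with rfl | rfl | rfl <;>
            rcases (by decide : ∀ m : Fin 3, m = 0 ∨ m = 1 ∨ m = 2) l with rfl | rfl | rfl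
          · exact absurd rfl hne
          · exact main01 hxy
          · exact main02 hxy
          · exact main01 (hθe.symm hxy)
          · exact absurd rfl hne
          · exact main21 (hθe.symm hxy)
          · exact main02 (hθe.symm hxy)
          · exact main21 hxy
          · exact absurd rfl hne
end

section
/- Let A be a finite nonempty set and w an n-ary weak near-unanimity operation on A with n ≥ 2. For an n-ary operation f and an m-ary operation g on A, let f◁g denote the (mn)-ary operation (f◁g)(x_1,…,x_{mn}) = f(g(x_1,…,x_m), g(x_{m+1},…,x_{2m}), …, g(x_{mn−m+1},…,x_{mn})). Let v = w◁w◁…◁w, where the composition ◁ occurs |A|! − 1 times (so v is built from |A|! copies of w and has arity n^{|A|!}). Then v is a weak near-unanimity operation on A, the binary operation x∘_v y := v(x,…,x,y) satisfies x∘_v y = x∘_w(x∘_w(… x∘_w(x∘_w y)…)) with ∘_w occurring |A|! times, and v is special: x∘_v(x∘_v y) = x∘_v y for all x,y ∈ A. -/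
/-- The composition `f ◁ g`: the `(m*n)`-ary operation
`(f◁g)(x₁,…,x_{mn}) = f(g(x₁,…,x_m), g(x_{m+1},…,x_{2m}), …)`. -/
def triangle {A : Type*} {n m : ℕ} (f : (Fin n → A) → A) (g : (Fin m → A) → A)
    (x : Fin (m * n) → A) : A :=
  f fun i => g fun j =>
    x ⟨i.val * m + j.val, by
      have hi : i.val + 1 ≤ n := i.isLt
      have hj : j.val < m := j.isLt
      calc i.val * m + j.val < i.val * m + m := by omega
        _ = (i.val + 1) * m := by ring
        _ ≤ n * m := Nat.mul_le_mul_right m hi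
        _ = m * n := Nat.mul_comm n m⟩

/-- The iterated composition `w ◁ (w ◁ (… ◁ w))` built from `k + 1` copies of
`w` (`k` occurrences of `◁`); it has arity `n ^ (k + 1)`. -/
def iterTriangle {A : Type*} {n : ℕ} (w : (Fin n → A) → A) :
    (k : ℕ) → (Fin (n ^ (k + 1)) → A) → A
  | 0 => fun x => w fun i => x (Fin.cast (pow_one n).symm i)
  | k + 1 => fun x => triangle w (iterTriangle w k)
      fun j => x (Fin.cast (pow_succ n (k + 1)).symm j)

/-- The derived binary operation `x ∘_w y := w(x, …, x, y)`. -/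
def wnuOp {A : Type*} {k : ℕ} (hk : 0 < k) (w : (Fin k → A) → A) (x y : A) : A :=
  w (Function.update (fun _ => x) ⟨k - 1, by omega⟩ y)

-- auxiliary lemmas

lemma block_index_eq {m : ℕ} {b b' r j : ℕ} (hr : r < m) (hj : j < m)
    (h : b' * m + j = b * m + r) : b' = b ∧ j = r := by
  have hm : 0 < m := by omega
  rw [Nat.mul_comm b' m, Nat.mul_comm b m] at h
  have h1 : (m * b' + j) % m = (m * b + r) % m := by rw [h]
  rw [Nat.mul_add_mod, Nat.mul_add_mod, Nat.mod_eq_of_lt hr, Nat.mod_eq_of_lt hj] at h1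
  subst h1
  have h2 : m * b' = m * b := by omega
  exact ⟨Nat.eq_of_mul_eq_mul_left hm h2, rfl⟩

lemma iterTriangle_idem {A : Type*} {n : ℕ} (w : (Fin n → A) → A) (hw : IsWNU w)
    (x : A) : ∀ k, iterTriangle w k (fun _ => x) = x
  | 0 => by simp [iterTriangle, hw.1]
  | k + 1 => by
      simp [iterTriangle, triangle, iterTriangle_idem w hw x k, hw.1]

lemma iterTriangle_update {A : Type*} {n : ℕ} (hn : 0 < n) (w : (Fin n → A) → A)
    (hw : IsWNU w) (x y : A) :
    ∀ (k : ℕ) (i : Fin (n ^ (k + 1))),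
      iterTriangle w k (Function.update (fun _ => x) i y) =
        (wnuOp hn w x)^[k + 1] y
  | 0, i => by
      have h1 : (fun i' : Fin n =>
          Function.update (fun _ => x) i y (Fin.cast (pow_one n).symm i')) =
          Function.update (fun _ => x) (Fin.cast (pow_one n) i) y := by
        funext i'
        simp [Function.update_apply, Fin.ext_iff]
      simp only [iterTriangle]
      rw [h1, hw.2 x y _ ⟨n - 1, by omega⟩]
      simp [wnuOp]
  | k + 1, i => by
      have hmpos : 0 < n ^ (k + 1) := pow_pos hn _
      have hblt : i.val / n ^ (k + 1) < n := by
        have h : i.val < n ^ (k + 1) * n := lt_of_lt_of_eq i.isLt (pow_succ n (k + 1))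
        exact Nat.div_lt_of_lt_mul h
      have hrlt : i.val % n ^ (k + 1) < n ^ (k + 1) := Nat.mod_lt _ hmpos
      have hbr : (i.val / n ^ (k + 1)) * n ^ (k + 1) + i.val % n ^ (k + 1) = i.val := by
        rw [Nat.mul_comm]; exact Nat.div_add_mod _ _
      simp only [iterTriangle, triangle]
      trans w (Function.update (fun _ => x) (⟨i.val / n ^ (k + 1), hblt⟩ : Fin n)
        ((wnuOp hn w x)^[k + 1] y))
      · refine congrArg w (funext fun bi : Fin n => ?_)
        by_cases hbi : bi.val = i.val / n ^ (k + 1)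
        · have hstep : (iterTriangle w k
              (Function.update (fun _ => x) (⟨i.val % n ^ (k + 1), hrlt⟩ : Fin (n ^ (k + 1))) y)) =
              (wnuOp hn w x)^[k + 1] y :=
            iterTriangle_update hn w hw x y k ⟨i.val % n ^ (k + 1), hrlt⟩
          rw [Function.update_apply, if_pos (Fin.ext hbi)]
          refine Eq.trans (congrArg (iterTriangle w k)
            (funext fun j : Fin (n ^ (k + 1)) => ?_)) hstep
          show Function.update (fun _ => x) i y _ =
            Function.update (fun _ => x) (⟨i.val % n ^ (k + 1), hrlt⟩ : Fin (n ^ (k + 1))) y j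
          by_cases hj : j.val = i.val % n ^ (k + 1)
          · rw [Function.update_apply, Function.update_apply,
              if_pos (show j = _ from Fin.ext hj), if_pos]
            apply Fin.ext
            simp only [Fin.coe_cast]
            rw [hbi, hj, hbr]
          · rw [Function.update_apply, Function.update_apply,
              if_neg (fun h : j = (⟨i.val % n ^ (k + 1), hrlt⟩ : Fin (n ^ (k + 1))) => hj (congrArg Fin.val h)), if_neg]
            intro h1
            have hv : bi.val * n ^ (k + 1) + j.val = i.val := by
              have := congrArg Fin.val h1
              simpa using this
            rw [hbi] at hv
            exact hj (block_index_eq hrlt j.isLt (hv.trans hbr.symm)).2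
        · rw [Function.update_apply, if_neg (fun h => hbi (congrArg Fin.val h))]
          refine Eq.trans (congrArg (iterTriangle w k)
            (funext fun j : Fin (n ^ (k + 1)) => ?_)) (iterTriangle_idem w hw x k)
          show Function.update (fun _ => x) i y _ = (fun _ : Fin (n ^ (k + 1)) => x) j
          rw [Function.update_apply, if_neg]
          intro h1
          have hv : bi.val * n ^ (k + 1) + j.val = i.val := by
            have := congrArg Fin.val h1
            simpa using this
          exact hbi (block_index_eq hrlt j.isLt (hv.trans hbr.symm)).1
      · rw [hw.2 x _ ⟨i.val / n ^ (k + 1), hblt⟩ ⟨n - 1, by omega⟩]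
        conv_rhs => rw [Function.iterate_succ_apply']
        rfl

lemma wnuOp_iterTriangle {A : Type*} {n : ℕ} (hn : 0 < n) (w : (Fin n → A) → A)
    (hw : IsWNU w) (k : ℕ) (x y : A) :
    wnuOp (pow_pos hn (k + 1)) (iterTriangle w k) x y = (wnuOp hn w x)^[k + 1] y :=
  iterTriangle_update hn w hw x y k _

lemma iterate_factorial_idempotent {A : Type*} [Fintype A] [Nonempty A]
    (f : A → A) (y : A) :
    f^[(Fintype.card A).factorial] (f^[(Fintype.card A).factorial] y) =
      f^[(Fintype.card A).factorial] y := by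
  set c := Fintype.card A with hc
  set N := c.factorial with hN
  have hc1 : 1 ≤ c := Fintype.card_pos
  have hcN : c ≤ N := Nat.self_le_factorial c
  obtain ⟨a, b, hab, hfab⟩ :=
    Fintype.exists_ne_map_eq_of_card_lt (fun t : Fin (c + 1) => f^[t.val] y)
      (by simp [hc])
  have hne : a.val ≠ b.val := fun h => hab (Fin.ext h)
  wlog hlt : a.val < b.val generalizing a b
  · exact this b a hab.symm hfab.symm hne.symm (by omega)
  have hp : 0 < b.val - a.val := by omega
  have hple : b.val - a.val ≤ c := by have := b.isLt; omega
  have hpN : (b.val - a.val) ∣ N := Nat.dvd_factorial hp hple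
  have hiN : a.val ≤ N := by have := a.isLt; omega
  have hper : ∀ t, a.val ≤ t → f^[t + (b.val - a.val)] y = f^[t] y := by
    intro t ht
    have h1 : t + (b.val - a.val) = (t - a.val) + b.val := by omega
    have h2 : t = (t - a.val) + a.val := by omega
    rw [h1, Function.iterate_add_apply, ← hfab, ← Function.iterate_add_apply, ← h2]
  have hmul : ∀ s t, a.val ≤ t → f^[t + s * (b.val - a.val)] y = f^[t] y := by
    intro s
    induction s with
    | zero => intro t _; simp
    | succ s ih =>
        intro t ht
        have h3 : t + (s + 1) * (b.val - a.val) =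
            (t + s * (b.val - a.val)) + (b.val - a.val) := by ring
        rw [h3, hper _ (by omega), ih t ht]
  rw [← Function.iterate_add_apply,
    show N + N = N + (N / (b.val - a.val)) * (b.val - a.val) by
      rw [Nat.div_mul_cancel hpN]]
  exact hmul _ _ hiN

/-- Iterating a weak near-unanimity operation `w` into
`v = w◁w◁…◁w` (with `|A|!` copies of `w`, i.e. `|A|! - 1` compositions)
yields a wnu operation `v` with
`x∘_v y = x∘_w(x∘_w(… (x∘_w y)…))` (`∘_w` occurring `|A|!` times), and `v` is
special: `x∘_v(x∘_v y) = x∘_v y`. -/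
theorem iterated_wnu_special {A : Type*} [Fintype A] [Nonempty A] {n : ℕ}
    (hn : 2 ≤ n) (w : (Fin n → A) → A) (hw : IsWNU w) :
    IsWNU (iterTriangle w ((Fintype.card A).factorial - 1)) ∧
    (∀ x y : A,
      wnuOp (pow_pos (show 0 < n by omega) _)
          (iterTriangle w ((Fintype.card A).factorial - 1)) x y =
        (wnuOp (show 0 < n by omega) w x)^[(Fintype.card A).factorial] y) ∧
    (∀ x y : A,
      wnuOp (pow_pos (show 0 < n by omega) _)
          (iterTriangle w ((Fintype.card A).factorial - 1)) x
        (wnuOp (pow_pos (show 0 < n by omega) _)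
          (iterTriangle w ((Fintype.card A).factorial - 1)) x y) =
      wnuOp (pow_pos (show 0 < n by omega) _)
          (iterTriangle w ((Fintype.card A).factorial - 1)) x y) := by
  have hn0 : 0 < n := by omega
  have hk1 : (Fintype.card A).factorial - 1 + 1 = (Fintype.card A).factorial :=
    Nat.succ_pred_eq_of_pos (Nat.factorial_pos _)
  have hmid : ∀ x y : A,
      wnuOp (pow_pos (show 0 < n by omega) _)
          (iterTriangle w ((Fintype.card A).factorial - 1)) x y =
        (wnuOp (show 0 < n by omega) w x)^[(Fintype.card A).factorial] y := by
    intro x y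
    exact (wnuOp_iterTriangle hn0 w hw ((Fintype.card A).factorial - 1) x y).trans
      (congrArg (fun t => (wnuOp hn0 w x)^[t] y) hk1)
  refine ⟨⟨fun x => iterTriangle_idem w hw x _, fun x y i j => ?_⟩, hmid, fun x y => ?_⟩
  · rw [iterTriangle_update hn0 w hw x y _ i, iterTriangle_update hn0 w hw x y _ j]
  · rw [hmid, hmid]
    exact iterate_factorial_idempotent _ y
end
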